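/- Let 𝓘 be a finite set of open real intervals, each I_v with a designated point ŵ_v ∈ I_v, such that for all distinct u, v we have ŵ_u ∉ I_v. Then every connected component of the intersection graph of 𝓘 is a path (possibly a single vertex), i.e., every vertex has degree at most 2 and no component contains a cycle. -/

import Mathlib

open SimpleGraph

private lemma two_left_nbrs {ι : Type*} (L U pw : ι → ℝ)
    (hpw : ∀ v : ι, pw v ∈ Set.Ioo (L v) (U v))
    (hfree : ∀ u v : ι, u ≠ v → pw u ∉ Set.Ioo (L v) (U v))
    {a b v : ι} (hab : a ≠ b) (hav : a ≠ v) (hbv : b ≠ v)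
    (hA : (Set.Ioo (L a) (U a) ∩ Set.Ioo (L v) (U v)).Nonempty)
    (hB : (Set.Ioo (L b) (U b) ∩ Set.Ioo (L v) (U v)).Nonempty)
    (hLa : pw a ≤ L v) (hLb : pw b ≤ L v) : False := by
  obtain ⟨x, ⟨hx1, hx2⟩, ⟨hx3, hx4⟩⟩ := hA
  obtain ⟨y, ⟨hy1, hy2⟩, ⟨hy3, hy4⟩⟩ := hB
  -- L v < U a and L v < U b
  have hUa : L v < U a := lt_of_le_of_lt (le_of_lt hx3) hx2
  have hUb : L v < U b := lt_of_le_of_lt (le_of_lt hy3) hy2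
  have h1 : pw a ∉ Set.Ioo (L b) (U b) := hfree a b hab
  have h2 : pw b ∉ Set.Ioo (L a) (U a) := hfree b a hab.symm
  simp only [Set.mem_Ioo, not_and, not_lt] at h1 h2
  have hpa : pw a ≤ L b := by
    by_contra h
    push_neg at h
    have := h1 h
    linarith
  have hpb : pw b ≤ L a := by
    by_contra h
    push_neg at h
    have := h2 h
    linarith
  have := (hpw a).1
  have := (hpw b).1
  linarith

private lemma two_right_nbrs {ι : Type*} (L U pw : ι → ℝ)
    (hpw : ∀ v : ι, pw v ∈ Set.Ioo (L v) (U v))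
    (hfree : ∀ u v : ι, u ≠ v → pw u ∉ Set.Ioo (L v) (U v))
    {a b v : ι} (hab : a ≠ b) (hav : a ≠ v) (hbv : b ≠ v)
    (hA : (Set.Ioo (L a) (U a) ∩ Set.Ioo (L v) (U v)).Nonempty)
    (hB : (Set.Ioo (L b) (U b) ∩ Set.Ioo (L v) (U v)).Nonempty)
    (hLa : U v ≤ pw a) (hLb : U v ≤ pw b) : False := by
  obtain ⟨x, ⟨hx1, hx2⟩, ⟨hx3, hx4⟩⟩ := hA
  obtain ⟨y, ⟨hy1, hy2⟩, ⟨hy3, hy4⟩⟩ := hB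
  have hUa : L a < U v := lt_of_lt_of_le hx1 (le_of_lt hx4)
  have hUb : L b < U v := lt_of_lt_of_le hy1 (le_of_lt hy4)
  have h1 : pw a ∉ Set.Ioo (L b) (U b) := hfree a b hab
  have h2 : pw b ∉ Set.Ioo (L a) (U a) := hfree b a hab.symm
  simp only [Set.mem_Ioo, not_and, not_lt] at h1 h2
  have hpa : U b ≤ pw a := h1 (by linarith)
  have hpb : U a ≤ pw b := h2 (by linarith)
  have := (hpw a).2
  have := (hpw b).2
  linarith

theorem stmt5 {ι : Type*} [Fintype ι] (L U pw : ι → ℝ)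
    (hpw : ∀ v : ι, pw v ∈ Set.Ioo (L v) (U v))
    (hfree : ∀ u v : ι, u ≠ v → pw u ∉ Set.Ioo (L v) (U v)) :
    (∀ v : ι, ((SimpleGraph.fromRel fun a b : ι =>
        (Set.Ioo (L a) (U a) ∩ Set.Ioo (L b) (U b)).Nonempty).neighborSet v).ncard ≤ 2) ∧
    (SimpleGraph.fromRel fun a b : ι =>
        (Set.Ioo (L a) (U a) ∩ Set.Ioo (L b) (U b)).Nonempty).IsAcyclic := by
  classical
  set G := (SimpleGraph.fromRel fun a b : ι =>
      (Set.Ioo (L a) (U a) ∩ Set.Ioo (L b) (U b)).Nonempty) with hG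
  -- adjacency unfolding
  have hadj : ∀ u v : ι, G.Adj u v → u ≠ v ∧
      (Set.Ioo (L u) (U u) ∩ Set.Ioo (L v) (U v)).Nonempty := by
    intro u v h
    rw [hG, SimpleGraph.fromRel_adj] at h
    refine ⟨h.1, ?_⟩
    rcases h.2 with h | h
    · exact h
    · rwa [Set.inter_comm]
  -- dichotomy for a neighbor
  have hdich : ∀ u v : ι, G.Adj u v → pw u ≤ L v ∨ U v ≤ pw u := by
    intro u v h
    obtain ⟨hne, -⟩ := hadj u v h
    have := hfree u v hne
    simp only [Set.mem_Ioo, not_and, not_lt] at this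
    by_cases hl : L v < pw u
    · exact Or.inr (this hl)
    · exact Or.inl (not_lt.mp hl)
  constructor
  · intro v
    have hsub : G.neighborSet v ⊆
        {u | G.Adj u v ∧ pw u ≤ L v} ∪ {u | G.Adj u v ∧ U v ≤ pw u} := by
      intro u hu
      have hu' : G.Adj u v := (G.mem_neighborSet v u).mp hu |>.symm
      rcases hdich u v hu' with h | h
      · exact Or.inl ⟨hu', h⟩
      · exact Or.inr ⟨hu', h⟩
    calc (G.neighborSet v).ncard
        ≤ ({u | G.Adj u v ∧ pw u ≤ L v} ∪ {u | G.Adj u v ∧ U v ≤ pw u}).ncard :=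
          Set.ncard_le_ncard hsub (Set.toFinite _)
      _ ≤ ({u | G.Adj u v ∧ pw u ≤ L v}).ncard + ({u | G.Adj u v ∧ U v ≤ pw u}).ncard :=
          Set.ncard_union_le _ _
      _ ≤ 1 + 1 := by
          gcongr
          · rw [Set.ncard_le_one_iff (Set.toFinite _)]
            rintro a b ⟨ha, hla⟩ ⟨hb, hlb⟩
            by_contra hab
            exact two_left_nbrs L U pw hpw hfree hab ha.ne hb.ne
              (hadj a v ha).2 (hadj b v hb).2 hla hlb
          · rw [Set.ncard_le_one_iff (Set.toFinite _)]
            rintro a b ⟨ha, hla⟩ ⟨hb, hlb⟩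
            by_contra hab
            exact two_right_nbrs L U pw hpw hfree hab ha.ne hb.ne
              (hadj a v ha).2 (hadj b v hb).2 hla hlb
      _ = 2 := rfl
  · intro w c hc
    -- pick a vertex of maximal pw on the cycle
    have hsupne : c.support.toFinset.Nonempty := by
      refine ⟨w, ?_⟩
      simp [SimpleGraph.Walk.start_mem_support]
    obtain ⟨m, hmmem, hmax⟩ := Finset.exists_max_image c.support.toFinset pw hsupne
    rw [List.mem_toFinset] at hmmem
    have hc' := hc.rotate hmmem
    set c' := c.rotate m hmmem with hc'def
    -- every neighbor of m on the cycle satisfies pw u ≤ L m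
    have hnbr : ∀ u : ι, G.Adj m u → u ∈ c.support → pw u ≤ L m := by
      intro u hu husupp
      have hum : pw u ≤ pw m := hmax u (List.mem_toFinset.mpr husupp)
      rcases hdich u m hu.symm with h | h
      · exact h
      · exact absurd (lt_of_lt_of_le (hpw m).2 (le_trans h hum)) (lt_irrefl _)
    -- decompose the rotated cycle
    cases hcc : c' with
    | nil => exact hc'.ne_nil (by rw [← hcc])
    | cons h p =>
      rw [hcc] at hc'
      rename_i b
      obtain ⟨hp, hne⟩ := (SimpleGraph.Walk.cons_isCycle_iff p h).mp hc'
      -- p : Walk b m, h : Adj m b. Get the other neighbor a at the end of p.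
      have hlen : 2 ≤ p.length := by
        have := hc'.three_le_length
        simp only [SimpleGraph.Walk.length_cons] at this
        omega
      have hpnil : ¬ p.reverse.Nil := by
        rw [SimpleGraph.Walk.nil_iff_length_eq, SimpleGraph.Walk.length_reverse]
        omega
      cases hq : p.reverse with
      | nil =>
        rw [hq] at hpnil
        exact hpnil SimpleGraph.Walk.Nil.nil
      | cons h' q' =>
        rename_i a
        have hadjma : G.Adj m a := h'
        have hedge : s(m, a) ∈ p.edges := by
          have h1 : s(m, a) ∈ p.reverse.edges := by
            rw [hq]
            simp
          rwa [SimpleGraph.Walk.edges_reverse, List.mem_reverse] at h1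
        have hab : a ≠ b := by
          rintro rfl
          exact hne hedge
        -- a and b are in c.support
        have hmem_c : ∀ x : ι, x ∈ c'.support → x ∈ c.support := by
          intro x hx
          rw [c'.support_eq_cons] at hx
          rcases List.mem_cons.mp hx with rfl | hx
          · exact hmmem
          · have : x ∈ c.support.tail :=
              ((SimpleGraph.Walk.support_rotate c m hmmem).mem_iff).mp hx
            exact List.mem_of_mem_tail this
        have hbsupp : b ∈ c.support := by
          apply hmem_c
          rw [hcc, SimpleGraph.Walk.support_cons]
          exact List.mem_cons_of_mem _ p.start_mem_support
        have hasupp : a ∈ c.support := by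
          apply hmem_c
          rw [hcc, SimpleGraph.Walk.support_cons]
          exact List.mem_cons_of_mem _ (SimpleGraph.Walk.snd_mem_support_of_mem_edges p hedge)
        exact two_left_nbrs L U pw hpw hfree hab hadjma.ne' h.ne'
          (hadj a m hadjma.symm).2 (hadj b m h.symm).2
          (hnbr a hadjma hasupp) (hnbr b h hbsupp)
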